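/- For every c ∈ ℝ, the function u ↦ u·(Φ(−(u+c)) − 𝟙{u < 0}) is Lebesgue integrable on ℝ, and ∫_{−∞}^{∞} u·(Φ(−(u+c)) − 𝟙{u < 0}) du = (1 + c²)/2. -/

import Mathlib

open MeasureTheory

noncomputable section

/-- The standard normal distribution function. -/
noncomputable def stdNormalCDF (t : ℝ) : ℝ :=
  ∫ s in Set.Iic t, (Real.sqrt (2 * Real.pi))⁻¹ * Real.exp (-(s ^ 2) / 2)

namespace Stmt4Aux

open Real Filter

noncomputable def phi (s : ℝ) : ℝ := (Real.sqrt (2 * Real.pi))⁻¹ * Real.exp (-(s ^ 2) / 2)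

lemma stdNormalCDF_eq (t : ℝ) : stdNormalCDF t = ∫ s in Set.Iic t, phi s := rfl

lemma phi_eq (s : ℝ) : phi s = (Real.sqrt (2 * Real.pi))⁻¹ * Real.exp (-(1/2) * s ^ 2) := by
  unfold phi; ring_nf

lemma phi_funext : phi = fun s => (Real.sqrt (2 * Real.pi))⁻¹ * Real.exp (-(1/2) * s ^ 2) :=
  funext phi_eq

lemma continuous_phi : Continuous phi := by
  unfold phi; fun_prop

lemma phi_nonneg (s : ℝ) : 0 ≤ phi s :=
  mul_nonneg (inv_nonneg.2 (Real.sqrt_nonneg _)) (Real.exp_pos _).le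

lemma integrable_phi : Integrable phi := by
  rw [phi_funext]
  exact (integrable_exp_neg_mul_sq (by norm_num : (0:ℝ) < 1/2)).const_mul _

lemma sqrt_two_pi_pos : (0:ℝ) < Real.sqrt (2 * Real.pi) :=
  Real.sqrt_pos.2 (by positivity)

lemma integral_phi : ∫ s, phi s = 1 := by
  simp_rw [phi_eq]
  rw [integral_const_mul, integral_gaussian]
  rw [show Real.pi / (1/2) = 2 * Real.pi by ring]
  exact inv_mul_cancel₀ sqrt_two_pi_pos.ne'

lemma integrable_mul_phi : Integrable (fun s => s * phi s) := by
  simp_rw [phi_eq, show ∀ s:ℝ, s * ((Real.sqrt (2 * Real.pi))⁻¹ * Real.exp (-(1/2) * s ^ 2))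
      = (Real.sqrt (2 * Real.pi))⁻¹ * (s * Real.exp (-(1/2) * s ^ 2)) by intro s; ring]
  exact (integrable_mul_exp_neg_mul_sq (by norm_num : (0:ℝ) < 1/2)).const_mul _

lemma integrable_sq_mul_exp : Integrable (fun s : ℝ => s ^ 2 * Real.exp (-(1/2) * s ^ 2)) := by
  have h := integrable_rpow_mul_exp_neg_mul_sq (b := 1/2) (by norm_num) (s := 2) (by norm_num)
  rw [show ((2:ℝ)) = ((2:ℕ):ℝ) by norm_num] at h
  simpa [Real.rpow_natCast] using h

lemma integrable_sq_mul_phi : Integrable (fun s => s ^ 2 * phi s) := by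
  simp_rw [phi_eq, show ∀ s:ℝ, s ^ 2 * ((Real.sqrt (2 * Real.pi))⁻¹ * Real.exp (-(1/2) * s ^ 2))
      = (Real.sqrt (2 * Real.pi))⁻¹ * (s ^ 2 * Real.exp (-(1/2) * s ^ 2)) by intro s; ring]
  exact integrable_sq_mul_exp.const_mul _

lemma integral_mul_phi : ∫ s, s * phi s = 0 := by
  have h : ∫ s, -s * phi (-s) = ∫ s, s * phi s := integral_neg_eq_self (fun s => s * phi s) _
  have h2 : ∀ s : ℝ, -s * phi (-s) = -(s * phi s) := by
    intro s; unfold phi; rw [neg_sq]; ring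
  simp_rw [h2, integral_neg] at h
  linarith

lemma tendsto_mul_exp_atTop' :
    Tendsto (fun x : ℝ => x * Real.exp (-(1/2) * x ^ 2)) atTop (nhds 0) := by
  have h := rpow_mul_exp_neg_mul_sq_isLittleO_exp_neg (b := 1/2) (by norm_num) 1
  have h2 : Tendsto (fun x : ℝ => Real.exp (-(1/2) * x)) atTop (nhds 0) := by
    have : Tendsto (fun x : ℝ => -(1/2) * x) atTop atBot :=
      Tendsto.const_mul_atTop_of_neg (by norm_num) tendsto_id
    exact Real.tendsto_exp_atBot.comp this
  have h3 := h.tendsto_zero_of_tendsto h2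
  refine h3.congr' ?_
  filter_upwards [eventually_ge_atTop (0:ℝ)] with x _
  rw [Real.rpow_one]

lemma integral_sq_sub_one_mul_exp :
    ∫ x : ℝ, (x ^ 2 - 1) * Real.exp (-(1/2) * x ^ 2) = 0 := by
  have hderiv : ∀ x : ℝ, HasDerivAt (fun x : ℝ => -x * Real.exp (-(1/2) * x ^ 2))
      ((x ^ 2 - 1) * Real.exp (-(1/2) * x ^ 2)) x := by
    intro x
    have h1 : HasDerivAt (fun x : ℝ => -(1/2) * x ^ 2) (-(1/2) * (2 * x)) x := by
      simpa using ((hasDerivAt_pow 2 x).const_mul (-(1/2 : ℝ)))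
    have h2 : HasDerivAt (fun x : ℝ => Real.exp (-(1/2) * x ^ 2))
        (Real.exp (-(1/2) * x ^ 2) * (-(1/2) * (2 * x))) x := h1.exp
    have h3 : HasDerivAt (fun y : ℝ => -y * Real.exp (-(1/2) * y ^ 2)) _ x := (hasDerivAt_neg x).mul h2
    convert h3 using 1
    ring
  have hint : Integrable (fun x : ℝ => (x ^ 2 - 1) * Real.exp (-(1/2) * x ^ 2)) := by
    have hexp := integrable_exp_neg_mul_sq (b := 1/2) (by norm_num)
    simpa [sub_mul, Pi.sub_def] using integrable_sq_mul_exp.sub hexp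
  have htop : Tendsto (fun x : ℝ => -x * Real.exp (-(1/2) * x ^ 2)) atTop (nhds 0) := by
    have := tendsto_mul_exp_atTop'.neg
    simpa [neg_mul] using this
  have hbot : Tendsto (fun x : ℝ => -x * Real.exp (-(1/2) * x ^ 2)) atBot (nhds 0) := by
    have h := tendsto_mul_exp_atTop'.comp tendsto_neg_atBot_atTop
    refine h.congr fun x => ?_
    simp only [Function.comp_apply, neg_sq, neg_mul]
  have := integral_of_hasDerivAt_of_tendsto hderiv hint hbot htop
  simpa using this

lemma integral_sq_mul_exp' :
    ∫ x : ℝ, x ^ 2 * Real.exp (-(1/2) * x ^ 2) = Real.sqrt (2 * Real.pi) := by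
  have h0 := integral_sq_sub_one_mul_exp
  have hexp := integrable_exp_neg_mul_sq (b := 1/2) (by norm_num)
  simp_rw [sub_mul, one_mul] at h0
  rw [integral_sub integrable_sq_mul_exp hexp, sub_eq_zero] at h0
  rw [h0, integral_gaussian, show Real.pi / (1/2) = 2 * Real.pi by ring]

lemma integral_sq_mul_phi : ∫ s, s ^ 2 * phi s = 1 := by
  simp_rw [phi_eq, show ∀ s:ℝ, s ^ 2 * ((Real.sqrt (2 * Real.pi))⁻¹ * Real.exp (-(1/2) * s ^ 2))
      = (Real.sqrt (2 * Real.pi))⁻¹ * (s ^ 2 * Real.exp (-(1/2) * s ^ 2)) by intro s; ring]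
  rw [integral_const_mul, integral_sq_mul_exp']
  exact inv_mul_cancel₀ sqrt_two_pi_pos.ne'

noncomputable def hh (a u : ℝ) : ℝ := u * ((if u ≤ a then 1 else 0) - if u < 0 then 1 else 0)

lemma hh_eq_nonneg {a : ℝ} (ha : 0 ≤ a) :
    hh a = (Set.Icc 0 a).indicator id := by
  funext u
  unfold hh
  rcases lt_trichotomy u 0 with hu | hu | hu
  · rw [if_pos (hu.le.trans ha), if_pos hu,
      Set.indicator_of_notMem (by simp [Set.mem_Icc]; intro h; linarith)]
    ring
  · subst hu
    by_cases h : (0:ℝ) ≤ a <;> simp [Set.indicator, ha]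
  · rw [if_neg (not_lt.2 hu.le)]
    by_cases h : u ≤ a
    · rw [if_pos h, Set.indicator_of_mem (Set.mem_Icc.2 ⟨hu.le, h⟩)]
      simp
    · rw [if_neg h, Set.indicator_of_notMem (fun hm => h hm.2)]
      ring

lemma hh_eq_neg {a : ℝ} (ha : a < 0) :
    hh a = (Set.Ioc a 0).indicator (fun u => -u) := by
  funext u
  unfold hh
  rcases le_or_gt u a with hu | hu
  · rw [if_pos hu, if_pos (lt_of_le_of_lt hu ha),
      Set.indicator_of_notMem (by simp [Set.mem_Ioc]; intro h; exact absurd hu (not_le.2 h))]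
    ring
  · rw [if_neg (not_le.2 hu)]
    rcases le_or_gt u 0 with hu2 | hu2
    · rw [Set.indicator_of_mem (Set.mem_Ioc.2 ⟨hu, hu2⟩)]
      rcases eq_or_lt_of_le hu2 with h | h
      · subst h; simp
      · rw [if_pos h]; ring
    · rw [if_neg (not_lt.2 hu2.le),
        Set.indicator_of_notMem (by simp [Set.mem_Ioc]; intro; linarith)]
      ring

lemma hh_nonneg (a u : ℝ) : 0 ≤ hh a u := by
  rcases le_or_gt 0 a with ha | ha
  · rw [hh_eq_nonneg ha]
    apply Set.indicator_nonneg
    intro x hx; exact hx.1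
  · rw [hh_eq_neg ha]
    apply Set.indicator_nonneg
    intro x hx; simpa using hx.2

lemma integrable_hh (a : ℝ) : Integrable (hh a) := by
  rcases le_or_gt 0 a with ha | ha
  · rw [hh_eq_nonneg ha]
    exact (ContinuousOn.integrableOn_compact isCompact_Icc
      continuous_id.continuousOn).integrable_indicator measurableSet_Icc
  · rw [hh_eq_neg ha]
    exact ((ContinuousOn.integrableOn_compact isCompact_Icc
      continuous_neg.continuousOn).mono_set Set.Ioc_subset_Icc_self).integrable_indicator
      measurableSet_Ioc

lemma integral_hh (a : ℝ) : ∫ u, hh a u = a ^ 2 / 2 := by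
  rcases le_or_gt 0 a with ha | ha
  · rw [hh_eq_nonneg ha, integral_indicator measurableSet_Icc]
    rw [integral_Icc_eq_integral_Ioc, ← intervalIntegral.integral_of_le ha]
    simp [integral_id]
  · rw [hh_eq_neg ha, integral_indicator measurableSet_Ioc,
      ← intervalIntegral.integral_of_le ha.le]
    rw [intervalIntegral.integral_neg]
    simp [integral_id]
    ring

lemma integrable_poly_phi (c : ℝ) : Integrable (fun s => (s + c) ^ 2 / 2 * phi s) := by
  have h : (fun s => (s + c) ^ 2 / 2 * phi s)
      = fun s => (1/2) * (s ^ 2 * phi s) + (c * (s * phi s) + (c ^ 2 / 2) * phi s) := by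
    funext s; ring
  rw [h]
  exact (integrable_sq_mul_phi.const_mul _).add
    ((integrable_mul_phi.const_mul _).add (integrable_phi.const_mul _))

lemma integral_poly_phi (c : ℝ) : ∫ s, (s + c) ^ 2 / 2 * phi s = (1 + c ^ 2) / 2 := by
  have h : (fun s => (s + c) ^ 2 / 2 * phi s)
      = fun s => (1/2) * (s ^ 2 * phi s) + (c * (s * phi s) + (c ^ 2 / 2) * phi s) := by
    funext s; ring
  have ha : Integrable (fun s => c * (s * phi s) + c ^ 2 / 2 * phi s) :=
    (integrable_mul_phi.const_mul c).add (integrable_phi.const_mul _)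
  have hb : Integrable (fun s => (1:ℝ)/2 * (s ^ 2 * phi s)) := integrable_sq_mul_phi.const_mul _
  have hc : Integrable (fun s => c * (s * phi s)) := integrable_mul_phi.const_mul c
  have hd : Integrable (fun s => c ^ 2 / 2 * phi s) := integrable_phi.const_mul _
  rw [h, integral_add hb ha, integral_add hc hd,
    integral_const_mul, integral_const_mul, integral_const_mul,
    integral_sq_mul_phi, integral_mul_phi, integral_phi]
  ring

end Stmt4Aux

open Stmt4Aux

theorem stmt4 (c : ℝ) :
    Integrable (fun u : ℝ => u * (stdNormalCDF (-(u + c)) - if u < 0 then 1 else 0)) ∧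
    (∫ u : ℝ, u * (stdNormalCDF (-(u + c)) - if u < 0 then 1 else 0)) = (1 + c ^ 2) / 2 := by
  classical
  let F : ℝ × ℝ → ℝ := fun p => hh (-(p.2 + c)) p.1 * phi p.2
  have hF_def : F = fun p => hh (-(p.2 + c)) p.1 * phi p.2 := rfl
  -- measurability
  have hmeas : Measurable F := by
    have h1 : Measurable fun p : ℝ × ℝ => (if p.1 ≤ -(p.2 + c) then (1:ℝ) else 0) :=
      Measurable.ite (measurableSet_le measurable_fst ((measurable_snd.add_const c).neg))
        measurable_const measurable_const
    have h2 : Measurable fun p : ℝ × ℝ => (if p.1 < 0 then (1:ℝ) else 0) :=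
      Measurable.ite (measurableSet_lt measurable_fst measurable_const)
        measurable_const measurable_const
    exact (measurable_fst.mul (h1.sub h2)).mul (continuous_phi.measurable.comp measurable_snd)
  have hF_nonneg : ∀ p, 0 ≤ F p := fun p => mul_nonneg (hh_nonneg _ _) (phi_nonneg _)
  -- slice in u for fixed s
  have hslice_u : ∀ s : ℝ, Integrable (fun u => F (u, s)) := by
    intro s
    simp only [hF_def]
    exact (integrable_hh (-(s + c))).mul_const _
  have hint_u : ∀ s : ℝ, ∫ u, F (u, s) = (s + c) ^ 2 / 2 * phi s := by
    intro s
    simp only [hF_def]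
    rw [integral_mul_const, integral_hh, neg_pow, neg_pow]
    norm_num
  -- integrable on product
  have hFint : Integrable F (volume.prod volume) := by
    rw [integrable_prod_iff' hmeas.aestronglyMeasurable]
    refine ⟨Filter.Eventually.of_forall hslice_u, ?_⟩
    have : (fun s => ∫ u, ‖F (u, s)‖) = fun s => (s + c) ^ 2 / 2 * phi s := by
      funext s
      rw [show (fun u => ‖F (u, s)‖) = fun u => F (u, s) from
        funext fun u => Real.norm_of_nonneg (hF_nonneg _)]
      exact hint_u s
    rw [this]
    exact integrable_poly_phi c
  -- slice in s for fixed u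
  have hslice_s : ∀ u : ℝ, ∫ s, F (u, s) =
      u * (stdNormalCDF (-(u + c)) - if u < 0 then 1 else 0) := by
    intro u
    have hcond : ∀ s : ℝ, (if u ≤ -(s + c) then (1:ℝ) else 0) = if s ≤ -(u + c) then 1 else 0 := by
      intro s
      exact if_congr ⟨fun h => by linarith, fun h => by linarith⟩ rfl rfl
    have hFe : (fun s => F (u, s)) = fun s =>
        u * ((Set.Iic (-(u + c))).indicator phi s) - (u * if u < 0 then 1 else 0) * phi s := by
      funext s
      simp only [hF_def, hh]
      rw [hcond s, Set.indicator_apply]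
      by_cases h : s ∈ Set.Iic (-(u + c))
      · rw [if_pos h, if_pos (Set.mem_Iic.1 h)]
        ring
      · rw [if_neg h, if_neg (fun hle => h (Set.mem_Iic.2 hle))]
        ring
    rw [hFe, integral_sub (((integrable_phi.integrableOn).integrable_indicator
        measurableSet_Iic).const_mul u) (integrable_phi.const_mul _),
      integral_const_mul, integral_const_mul, integral_indicator measurableSet_Iic,
      ← stdNormalCDF_eq, integral_phi]
    ring
  constructor
  · have := hFint.integral_prod_left
    refine this.congr (Filter.Eventually.of_forall fun u => ?_)
    exact hslice_s u
  · have h1 : (fun u : ℝ => u * (stdNormalCDF (-(u + c)) - if u < 0 then 1 else 0))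
        = fun u => ∫ s, F (u, s) := by
      funext u; exact (hslice_s u).symm
    rw [h1]
    rw [MeasureTheory.integral_integral_swap (by exact hFint)]
    simp_rw [hint_u]
    exact integral_poly_phi c
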